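/- Let ρ be a density matrix on ℂᴹ⊗ℂᴺ with sorted eigenvalue vector λ and let λ' be the sorted eigenvalue vector of ρ^{τ_B}. Then for every zero-discord state σ, ‖ρ − σ‖₂² ≥ (1/2)(‖λ − μ‖₂² + ‖λ' − μ‖₂²), where μ is the sorted eigenvalue vector of σ. -/

import Mathlib

open Matrix Kronecker ComplexOrder

/-- Partial transpose on the second tensor factor. -/
def ptB {m n : ℕ} (X : Matrix (Fin m × Fin n) (Fin m × Fin n) ℂ) :
    Matrix (Fin m × Fin n) (Fin m × Fin n) ℂ :=
  fun p q => X (p.1, q.2) (q.1, p.2)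

/-- Outer product |v⟩⟨v|. -/
noncomputable def outer {n : Type*} (v : n → ℂ) : Matrix n n ℂ :=
  Matrix.vecMulVec v (fun j => star (v j))

lemma key_ds {d : ℕ} (a b : Fin d → ℝ) (ha : Antitone a) (hb : Antitone b)
    (S : Matrix (Fin d) (Fin d) ℝ) (hS : S ∈ doublyStochastic ℝ (Fin d)) :
    ∑ i, ∑ j, a i * b j * S i j ≤ ∑ i, a i * b i := by
  have hmono : Monovary a b := by
    intro i j hb'
    rcases le_total i j with h | h
    · rcases lt_or_eq_of_le h with h' | h'
      · exact absurd (hb h) (not_le.2 hb')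
      · simp [h']
    · exact ha h
  obtain ⟨w, hw0, hw1, hwS⟩ := exists_eq_sum_perm_of_mem_doublyStochastic hS
  have hperm : ∀ π : Equiv.Perm (Fin d),
      ∑ i, ∑ j, a i * b j * (π.permMatrix ℝ) i j = ∑ i, a i * b (π i) := by
    intro π
    refine Finset.sum_congr rfl fun i _ => ?_
    rw [Finset.sum_eq_single (π i)]
    · simp [Equiv.Perm.permMatrix, PEquiv.toMatrix, Equiv.toPEquiv]
    · intro j _ hj
      simp [Equiv.Perm.permMatrix, PEquiv.toMatrix, Equiv.toPEquiv, Ne.symm hj]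
    · simp
  calc ∑ i, ∑ j, a i * b j * S i j
      = ∑ π : Equiv.Perm (Fin d), w π * ∑ i, a i * b (π i) := by
        rw [← hwS]
        have h1 : ∀ i j, a i * b j * (∑ π : Equiv.Perm (Fin d), w π • π.permMatrix ℝ) i j
            = ∑ π : Equiv.Perm (Fin d), w π * (a i * b j * (π.permMatrix ℝ) i j) := by
          intro i j
          rw [Matrix.sum_apply, Finset.mul_sum]
          exact Finset.sum_congr rfl fun π _ => by simp [Matrix.smul_apply]; ring
        simp only [h1]
        rw [show (∑ i, ∑ j, ∑ π : Equiv.Perm (Fin d), w π * (a i * b j * (π.permMatrix ℝ) i j))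
            = ∑ π : Equiv.Perm (Fin d), ∑ i, ∑ j, w π * (a i * b j * (π.permMatrix ℝ) i j) from
          (Finset.sum_congr rfl fun i _ => Finset.sum_comm).trans Finset.sum_comm]
        refine Finset.sum_congr rfl fun π _ => ?_
        rw [← hperm π, Finset.mul_sum]
        refine Finset.sum_congr rfl fun i _ => ?_
        rw [Finset.mul_sum]
    _ ≤ ∑ π : Equiv.Perm (Fin d), w π * ∑ i, a i * b i := by
        refine Finset.sum_le_sum fun π _ => ?_
        exact mul_le_mul_of_nonneg_left (hmono.sum_mul_comp_perm_le_sum_mul) (hw0 π)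
    _ = ∑ i, a i * b i := by rw [← Finset.sum_mul, hw1, one_mul]

lemma hw {n : Type*} [Fintype n] [DecidableEq n] {d : ℕ}
    (A B U V : Matrix n n ℂ) (hU : U ∈ Matrix.unitaryGroup n ℂ) (hV : V ∈ Matrix.unitaryGroup n ℂ)
    (a b : Fin d → ℝ) (ga gb : Fin d ≃ n)
    (hA : A = U * Matrix.diagonal (fun i => (a (ga.symm i) : ℂ)) * star U)
    (hB : B = V * Matrix.diagonal (fun i => (b (gb.symm i) : ℂ)) * star V)
    (haS : Antitone a) (hbS : Antitone b) :
    ∑ i, (a i - b i) ^ 2 ≤ ∑ p, ∑ q, ‖(A - B) p q‖ ^ 2 := by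
  have hU1 : U * star U = 1 := (Matrix.mem_unitaryGroup_iff).mp hU
  have hU2 : star U * U = 1 := (Matrix.mem_unitaryGroup_iff').mp hU
  have hV1 : V * star V = 1 := (Matrix.mem_unitaryGroup_iff).mp hV
  have hV2 : star V * V = 1 := (Matrix.mem_unitaryGroup_iff').mp hV
  set Da : Matrix n n ℂ := Matrix.diagonal (fun i => (a (ga.symm i) : ℂ)) with hDa
  set Db : Matrix n n ℂ := Matrix.diagonal (fun i => (b (gb.symm i) : ℂ)) with hDb
  -- Frobenius norm as a trace
  have frob : ∀ X : Matrix n n ℂ, ∑ p, ∑ q, ‖X p q‖ ^ 2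
      = (Matrix.trace (X * star X)).re := by
    intro X
    have h : Matrix.trace (X * star X) = ((∑ p, ∑ q, ‖X p q‖ ^ 2 : ℝ) : ℂ) := by
      rw [Matrix.trace]
      push_cast
      refine Finset.sum_congr rfl fun p _ => ?_
      rw [Matrix.diag, Matrix.mul_apply]
      refine Finset.sum_congr rfl fun q _ => ?_
      rw [← Complex.ofReal_pow, Complex.sq_norm, Matrix.star_apply, Complex.star_def,
        Complex.mul_conj]
    rw [h, Complex.ofReal_re]
  -- A and B are Hermitian
  have hDas : star Da = Da := by
    rw [hDa]
    ext i j
    by_cases h : i = j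
    · simp [Matrix.star_apply, Matrix.diagonal_apply, h, Complex.conj_ofReal]
    · simp [Matrix.star_apply, Matrix.diagonal_apply, h]
      exact fun h' => absurd h'.symm h
  have hDbs : star Db = Db := by
    rw [hDb]
    ext i j
    by_cases h : i = j
    · simp [Matrix.star_apply, Matrix.diagonal_apply, h, Complex.conj_ofReal]
    · simp [Matrix.star_apply, Matrix.diagonal_apply, h]
      exact fun h' => absurd h'.symm h
  have hAH : star A = A := by
    rw [hA, Matrix.star_mul, Matrix.star_mul, star_star, hDas, mul_assoc]
  have hBH : star B = B := by
    rw [hB, Matrix.star_mul, Matrix.star_mul, star_star, hDbs, mul_assoc]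
  have tconj : ∀ P X : Matrix n n ℂ, star P * P = 1 →
      Matrix.trace (P * X * star P) = Matrix.trace X := by
    intro P X hP
    rw [Matrix.trace_mul_cycle, hP, one_mul]
  -- trace of A*A
  have tsq : ∀ (P : Matrix n n ℂ) (hP2 : star P * P = 1) (hP1 : P * star P = 1)
      (c : Fin d → ℝ) (gc : Fin d ≃ n),
      Matrix.trace ((P * Matrix.diagonal (fun i => (c (gc.symm i) : ℂ)) * star P) *
        (P * Matrix.diagonal (fun i => (c (gc.symm i) : ℂ)) * star P))
        = ((∑ i, c i ^ 2 : ℝ) : ℂ) := by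
    intro P hP2 hP1 c gc
    set Dc : Matrix n n ℂ := Matrix.diagonal (fun i => (c (gc.symm i) : ℂ)) with hDc
    have e1 : star P * (P * (Dc * star P)) = Dc * star P := by
      rw [← mul_assoc, hP2, one_mul]
    have e0 : P * Dc * star P * (P * Dc * star P) = P * (Dc * Dc) * star P := by
      simp only [mul_assoc, e1]
    rw [e0, tconj P _ hP2, hDc, Matrix.diagonal_mul_diagonal, Matrix.trace_diagonal]
    push_cast
    rw [← Equiv.sum_comp gc.symm (fun j : Fin d => (c j : ℂ) ^ 2)]
    exact Finset.sum_congr rfl fun i _ => (sq _).symm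
  have tAA : Matrix.trace (A * A) = ((∑ i, a i ^ 2 : ℝ) : ℂ) := by
    rw [hA]; exact tsq U hU2 hU1 a ga
  have tBB : Matrix.trace (B * B) = ((∑ i, b i ^ 2 : ℝ) : ℂ) := by
    rw [hB]; exact tsq V hV2 hV1 b gb
  -- trace of A*B
  set W : Matrix n n ℂ := star U * V with hWdef
  have hW1 : W * star W = 1 := by
    rw [hWdef, Matrix.star_mul, star_star, mul_assoc, ← mul_assoc V, hV1, one_mul, hU2]
  have hW2 : star W * W = 1 := by
    rw [hWdef, Matrix.star_mul, star_star, mul_assoc, ← mul_assoc U, hU1, one_mul, hV2]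
  set S : Matrix (Fin d) (Fin d) ℝ :=
    Matrix.of (fun i j => Complex.normSq (W (ga i) (gb j))) with hSdef
  have e2 : A * B = U * (Da * (W * (Db * star W))) * star U := by
    rw [hA, hB, hWdef, Matrix.star_mul, star_star]
    simp only [mul_assoc]
    rw [hU1, mul_one]
  have e3 : Matrix.trace (A * B) = ((∑ i, ∑ j, a i * b j * S i j : ℝ) : ℂ) := by
    rw [e2, tconj U _ hU2]
    have e4 : Matrix.trace (Da * (W * (Db * star W)))
        = ∑ p, ∑ q, (a (ga.symm p) : ℂ) * (b (gb.symm q) : ℂ)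
            * ((Complex.normSq (W p q) : ℝ) : ℂ) := by
      rw [Matrix.trace]
      refine Finset.sum_congr rfl fun p _ => ?_
      simp only [hDa, hDb, Matrix.diag_apply, Matrix.mul_apply, Matrix.diagonal_apply,
        Matrix.star_apply, ite_mul, zero_mul, Finset.sum_ite_eq, Finset.sum_ite_eq',
        Finset.mem_univ, if_true]
      rw [Finset.mul_sum]
      refine Finset.sum_congr rfl fun q _ => ?_
      rw [show (a (ga.symm p) : ℂ) * (W p q * ((b (gb.symm q) : ℂ) * star (W p q)))
          = (a (ga.symm p) : ℂ) * (b (gb.symm q) : ℂ) * (W p q * star (W p q)) from by ring]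
      rw [Complex.star_def, Complex.mul_conj]
    rw [e4]
    push_cast
    rw [← Equiv.sum_comp ga (fun p => ∑ q, (a (ga.symm p) : ℂ) * (b (gb.symm q) : ℂ)
      * ((Complex.normSq (W p q) : ℝ) : ℂ))]
    refine Finset.sum_congr rfl fun i _ => ?_
    rw [← Equiv.sum_comp gb (fun q => (a (ga.symm (ga i)) : ℂ) * (b (gb.symm q) : ℂ)
      * ((Complex.normSq (W (ga i) q) : ℝ) : ℂ))]
    refine Finset.sum_congr rfl fun j _ => ?_
    simp [hSdef]
  -- S is doubly stochastic
  have hSmem : S ∈ doublyStochastic ℝ (Fin d) := by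
    rw [mem_doublyStochastic_iff_sum]
    refine ⟨fun i j => Complex.normSq_nonneg _, fun i => ?_, fun j => ?_⟩
    · have h1 : (W * star W) (ga i) (ga i) = 1 := by rw [hW1, Matrix.one_apply_eq]
      have h2 : (W * star W) (ga i) (ga i)
          = ((∑ q, Complex.normSq (W (ga i) q) : ℝ) : ℂ) := by
        rw [Matrix.mul_apply]
        push_cast
        refine Finset.sum_congr rfl fun q _ => ?_
        rw [Matrix.star_apply, Complex.star_def, Complex.mul_conj]
      have h3 : ((∑ q, Complex.normSq (W (ga i) q) : ℝ) : ℂ) = 1 := by rw [← h2, h1]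
      have h4 : (∑ q, Complex.normSq (W (ga i) q) : ℝ) = 1 := by
        exact_mod_cast h3
      rw [← h4, ← Equiv.sum_comp gb (fun q => Complex.normSq (W (ga i) q))]
      rfl
    · have h1 : (star W * W) (gb j) (gb j) = 1 := by rw [hW2, Matrix.one_apply_eq]
      have h2 : (star W * W) (gb j) (gb j)
          = ((∑ p, Complex.normSq (W p (gb j)) : ℝ) : ℂ) := by
        rw [Matrix.mul_apply]
        push_cast
        refine Finset.sum_congr rfl fun p _ => ?_
        rw [Matrix.star_apply, Complex.star_def, mul_comm, Complex.mul_conj]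
      have h3 : ((∑ p, Complex.normSq (W p (gb j)) : ℝ) : ℂ) = 1 := by rw [← h2, h1]
      have h4 : (∑ p, Complex.normSq (W p (gb j)) : ℝ) = 1 := by
        exact_mod_cast h3
      rw [← h4, ← Equiv.sum_comp ga (fun p => Complex.normSq (W p (gb j)))]
      rfl
  have hkey := key_ds a b haS hbS S hSmem
  -- expand the trace of (A-B)^2
  have hstarAB : star (A - B) = A - B := by rw [star_sub, hAH, hBH]
  have texp : Matrix.trace ((A - B) * star (A - B))
      = Matrix.trace (A * A) + Matrix.trace (B * B)
        - Matrix.trace (A * B) - Matrix.trace (B * A) := by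
    rw [hstarAB, sub_mul, mul_sub, mul_sub, Matrix.trace_sub, Matrix.trace_sub,
      Matrix.trace_sub]
    ring
  have tBA : Matrix.trace (B * A) = Matrix.trace (A * B) := Matrix.trace_mul_comm B A
  rw [frob (A - B), texp, tBA, tAA, tBB, e3]
  have hsq : ∑ i, (a i - b i) ^ 2
      = ∑ i, a i ^ 2 + ∑ i, b i ^ 2 - 2 * ∑ i, a i * b i := by
    rw [Finset.mul_sum, ← Finset.sum_add_distrib, ← Finset.sum_sub_distrib]
    exact Finset.sum_congr rfl fun i _ => by ring
  simp only [Complex.add_re, Complex.sub_re, Complex.ofReal_re]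
  linarith

-- star of outer
lemma star_outer {n : Type*} (v : n → ℂ) : star (outer v) = outer v := by
  ext i j
  simp [outer, Matrix.star_apply, Matrix.vecMulVec_apply, mul_comm]

-- star of kronecker
lemma star_kron {M N : ℕ} (A : Matrix (Fin M) (Fin M) ℂ) (B : Matrix (Fin N) (Fin N) ℂ) :
    star (A ⊗ₖ B) = star A ⊗ₖ star B := by
  ext p q
  simp [Matrix.star_apply, Matrix.kroneckerMap_apply, mul_comm]

-- sum pulled out of kronecker (left)
lemma sum_kron {ι M N : ℕ} (A : Fin ι → Matrix (Fin M) (Fin M) ℂ)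
    (B : Matrix (Fin N) (Fin N) ℂ) :
    (∑ k, A k) ⊗ₖ B = ∑ k, (A k ⊗ₖ B) := by
  ext p q
  simp [Matrix.kroneckerMap_apply, Matrix.sum_apply, Finset.sum_mul]

-- ptB of a kronecker product
lemma ptB_kron {M N : ℕ} (A : Matrix (Fin M) (Fin M) ℂ) (B : Matrix (Fin N) (Fin N) ℂ) :
    ptB (A ⊗ₖ B) = A ⊗ₖ Bᵀ := by
  ext p q
  simp [ptB, Matrix.kroneckerMap_apply, Matrix.transpose_apply]

-- frobenius invariance of ptB
lemma frob_ptB {M N : ℕ} (X : Matrix (Fin M × Fin N) (Fin M × Fin N) ℂ) :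
    ∑ p, ∑ q, ‖ptB X p q‖ ^ 2 = ∑ p, ∑ q, ‖X p q‖ ^ 2 := by
  rw [← Finset.sum_product', ← Finset.sum_product', Finset.univ_product_univ]
  refine Fintype.sum_equiv
    ⟨fun r => ((r.1.1, r.2.2), (r.2.1, r.1.2)), fun r => ((r.1.1, r.2.2), (r.2.1, r.1.2)),
      fun r => rfl, fun r => rfl⟩
    (fun r => ‖ptB X r.1 r.2‖ ^ 2)
    (fun r => ‖X r.1 r.2‖ ^ 2) (fun r => ?_)
  simp only [Equiv.coe_fn_mk, ptB]

-- outer products of orthonormal vectors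
lemma outer_mul_outer {M : ℕ} (e : Fin M → (Fin M → ℂ))
    (horth : ∀ k l, ∑ m, star (e k m) * e l m = if k = l then 1 else 0) (k l : Fin M) :
    outer (e k) * outer (e l) = (if k = l then (1 : ℂ) else 0) • outer (e k) := by
  ext i j
  simp only [Matrix.mul_apply, outer, Matrix.vecMulVec_apply, Matrix.smul_apply,
    smul_eq_mul]
  calc ∑ m, e k i * star (e k m) * (e l m * star (e l j))
      = (∑ m, star (e k m) * e l m) * (e k i * star (e l j)) := by
        rw [Finset.sum_mul]
        exact Finset.sum_congr rfl fun m _ => by ring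
    _ = (if k = l then (1 : ℂ) else 0) * (e k i * star (e k j)) := by
        rw [horth k l]
        by_cases h : k = l
        · subst h; simp
        · simp [h]
    _ = _ := by ring

-- completeness of an orthonormal family of M vectors in ℂ^M
lemma sum_outer_eq_one {M : ℕ} (e : Fin M → (Fin M → ℂ))
    (horth : ∀ k l, ∑ m, star (e k m) * e l m = if k = l then 1 else 0) :
    ∑ k, outer (e k) = 1 := by
  set E : Matrix (Fin M) (Fin M) ℂ := Matrix.of (fun k m => e k m) with hE
  have h1 : E * star E = 1 := by
    ext k l
    simp only [Matrix.mul_apply, Matrix.star_apply, hE, Matrix.of_apply]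
    calc ∑ m, e k m * star (e l m)
        = star (∑ m, star (e k m) * e l m) := by
          rw [star_sum]
          exact Finset.sum_congr rfl fun m _ => by simp [star_mul']
      _ = star ((if k = l then (1 : ℂ) else 0)) := by rw [horth k l]
      _ = (1 : Matrix (Fin M) (Fin M) ℂ) k l := by
          by_cases h : k = l
          · subst h; simp
          · simp [h, Matrix.one_apply]
  have h2 : star E * E = 1 := mul_eq_one_comm.mp h1
  ext i j
  have hthis := congrFun (congrFun h2 i) j
  simp only [Matrix.mul_apply, Matrix.star_apply, hE, Matrix.of_apply] at hthis
  simp only [Matrix.sum_apply, outer, Matrix.vecMulVec_apply]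
  calc ∑ k, e k i * star (e k j)
      = star (∑ k, star (e k i) * e k j) := by
        rw [star_sum]
        exact Finset.sum_congr rfl fun m _ => by simp [star_mul']
    _ = star ((1 : Matrix (Fin M) (Fin M) ℂ) i j) := by rw [hthis]
    _ = (1 : Matrix (Fin M) (Fin M) ℂ) i j := by
        by_cases h : i = j
        · subst h; simp
        · simp [h, Matrix.one_apply]

-- a unitary conjugating a Hermitian matrix to its transpose
lemma exists_conj_to_transpose {N : ℕ} (τ : Matrix (Fin N) (Fin N) ℂ)
    (hτ : τ.IsHermitian) :
    ∃ C : Matrix (Fin N) (Fin N) ℂ,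
      C * star C = 1 ∧ star C * C = 1 ∧ C * τ * star C = τᵀ := by
  set P : Matrix (Fin N) (Fin N) ℂ := (hτ.eigenvectorUnitary : Matrix (Fin N) (Fin N) ℂ)
    with hP
  have hP1 : P * star P = 1 := (Matrix.mem_unitaryGroup_iff).mp hτ.eigenvectorUnitary.2
  have hP2 : star P * P = 1 := (Matrix.mem_unitaryGroup_iff').mp hτ.eigenvectorUnitary.2
  set D : Matrix (Fin N) (Fin N) ℂ :=
    Matrix.diagonal (RCLike.ofReal ∘ hτ.eigenvalues) with hD
  have hspec : τ = P * D * star P := hτ.spectral_theorem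
  set Q : Matrix (Fin N) (Fin N) ℂ := P.map (starRingEnd ℂ) with hQ
  have hQs : star Q = Pᵀ := by
    ext i j
    simp [hQ, Matrix.star_apply, Matrix.map_apply]
  have hQP : Q = (star P)ᵀ := by
    ext i j
    simp [hQ, Matrix.star_apply, Matrix.map_apply]
  have hQ1 : Q * star Q = 1 := by
    rw [hQs, hQP, ← Matrix.transpose_mul, hP1, Matrix.transpose_one]
  have hQ2 : star Q * Q = 1 := by
    rw [hQs, hQP, ← Matrix.transpose_mul, hP2, Matrix.transpose_one]
  refine ⟨Q * star P, ?_, ?_, ?_⟩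
  · have hsC : star (Q * star P) = P * star Q := by
      rw [Matrix.star_mul, star_star]
    rw [hsC, mul_assoc, ← mul_assoc (star P), hP2, one_mul, hQ1]
  · have hsC : star (Q * star P) = P * star Q := by
      rw [Matrix.star_mul, star_star]
    rw [hsC, mul_assoc, ← mul_assoc (star Q), hQ2, one_mul, hP1]
  · have hsC : star (Q * star P) = P * star Q := by
      rw [Matrix.star_mul, star_star]
    rw [hsC]
    have lhs : Q * star P * (P * D * star P) * (P * star Q) = Q * D * star Q := by
      simp only [mul_assoc]
      rw [← mul_assoc (star P) P, hP2, one_mul, ← mul_assoc (star P) P, hP2, one_mul]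
    have rhs : τᵀ = Q * D * star Q := by
      rw [hspec, Matrix.transpose_mul, Matrix.transpose_mul, ← hQP, ← hQs, hD,
        Matrix.diagonal_transpose, ← hD, ← mul_assoc]
    rw [← hspec] at lhs
    rw [lhs, rhs]

lemma conj_sigma {M N : ℕ} (p : Fin M → ℝ) (e : Fin M → (Fin M → ℂ))
    (τ : Fin M → Matrix (Fin N) (Fin N) ℂ)
    (horth : ∀ k l, ∑ m, star (e k m) * e l m = if k = l then 1 else 0)
    (hτH : ∀ k, (τ k).IsHermitian) :
    ∃ W : Matrix (Fin M × Fin N) (Fin M × Fin N) ℂ,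
      W ∈ Matrix.unitaryGroup (Fin M × Fin N) ℂ ∧
      W * (∑ k, (p k : ℂ) • (outer (e k) ⊗ₖ τ k)) * star W
        = ∑ k, (p k : ℂ) • (outer (e k) ⊗ₖ (τ k)ᵀ) := by
  choose C hC1 hC2 hC3 using fun k => exists_conj_to_transpose (τ k) (hτH k)
  set W : Matrix (Fin M × Fin N) (Fin M × Fin N) ℂ := ∑ k, outer (e k) ⊗ₖ C k with hW
  have hstarW : star W = ∑ k, outer (e k) ⊗ₖ star (C k) := by
    rw [hW, star_sum]
    exact Finset.sum_congr rfl fun k _ => by rw [star_kron, star_outer]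
  have hdel : ∀ (k l : Fin M) (X : Matrix (Fin N) (Fin N) ℂ),
      (outer (e k) * outer (e l)) ⊗ₖ X
        = (if k = l then (1 : ℂ) else 0) • (outer (e k) ⊗ₖ X) := by
    intro k l X
    rw [outer_mul_outer e horth, Matrix.smul_kronecker]
  have hWW : W * star W = 1 := by
    rw [hW, hstarW, Finset.sum_mul_sum]
    have : ∀ k : Fin M, ∑ l : Fin M,
        (outer (e k) ⊗ₖ C k) * (outer (e l) ⊗ₖ star (C l))
          = outer (e k) ⊗ₖ 1 := by
      intro k
      rw [Finset.sum_eq_single k]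
      · rw [← Matrix.mul_kronecker_mul, hdel, if_pos rfl, one_smul, hC1]
      · intro l _ hl
        rw [← Matrix.mul_kronecker_mul, hdel, if_neg (Ne.symm hl),
          zero_smul]
      · simp
    simp only [this]
    rw [← sum_kron, sum_outer_eq_one e horth, Matrix.one_kronecker_one]
  have hWsW : star W * W = 1 := mul_eq_one_comm.mp hWW
  refine ⟨W, Matrix.mem_unitaryGroup_iff.mpr hWW, ?_⟩
  have step1 : (∑ k, (p k : ℂ) • (outer (e k) ⊗ₖ τ k)) * star W
      = ∑ k, (p k : ℂ) • (outer (e k) ⊗ₖ (τ k * star (C k))) := by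
    rw [hstarW, Finset.sum_mul_sum]
    refine Finset.sum_congr rfl fun l _ => ?_
    rw [Finset.sum_eq_single l]
    · rw [Matrix.smul_mul, ← Matrix.mul_kronecker_mul, hdel, if_pos rfl, one_smul]
    · intro k _ hk
      rw [Matrix.smul_mul, ← Matrix.mul_kronecker_mul, hdel, if_neg (Ne.symm hk), zero_smul,
        smul_zero]
    · simp
  have step2 : W * (∑ k, (p k : ℂ) • (outer (e k) ⊗ₖ (τ k * star (C k))))
      = ∑ k, (p k : ℂ) • (outer (e k) ⊗ₖ (τ k)ᵀ) := by
    rw [hW, Finset.sum_mul_sum]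
    refine Finset.sum_congr rfl fun k _ => ?_
    rw [Finset.sum_eq_single k]
    · rw [Matrix.mul_smul, ← Matrix.mul_kronecker_mul, hdel, if_pos rfl, one_smul,
        ← mul_assoc, hC3]
    · intro l _ hl
      rw [Matrix.mul_smul, ← Matrix.mul_kronecker_mul, hdel, if_neg (fun h => hl h.symm),
        zero_smul, smul_zero]
    · simp
  rw [mul_assoc, step1, step2]

lemma ptB_sum_smul {m n ι : ℕ} (c : Fin ι → ℂ)
    (X : Fin ι → Matrix (Fin m × Fin n) (Fin m × Fin n) ℂ) :
    ptB (∑ k, c k • X k) = ∑ k, c k • ptB (X k) := by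
  ext p q
  simp [ptB, Matrix.sum_apply, Matrix.smul_apply]


theorem stmt14 {M N : ℕ} (ρ σ : Matrix (Fin M × Fin N) (Fin M × Fin N) ℂ)
    (hρ : ρ.PosSemidef) (hρtr : ρ.trace = 1) (hρ' : (ptB ρ).IsHermitian)
    (hσH : σ.IsHermitian)
    -- σ is a zero-discord state:
    (p : Fin M → ℝ) (e : Fin M → (Fin M → ℂ)) (τ : Fin M → Matrix (Fin N) (Fin N) ℂ)
    (hp : ∀ k, 0 ≤ p k) (hpsum : ∑ k, p k = 1)
    (horth : ∀ k l, ∑ m, star (e k m) * e l m = if k = l then 1 else 0)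
    (hτpsd : ∀ k, (τ k).PosSemidef) (hτtr : ∀ k, (τ k).trace = 1)
    (hdecomp : σ = ∑ k, (p k : ℂ) • (outer (e k) ⊗ₖ τ k))
    -- sorted eigenvalue vectors of ρ, ρ^{τ_B}, σ:
    (lam lam' mu : Fin (M * N) → ℝ)
    (g g' gσ : Fin (M * N) ≃ Fin M × Fin N)
    (hlam : lam = hρ.1.eigenvalues ∘ g) (hlam' : lam' = hρ'.eigenvalues ∘ g')
    (hmu : mu = hσH.eigenvalues ∘ gσ)
    (hlamSorted : Antitone lam) (hlam'Sorted : Antitone lam') (hmuSorted : Antitone mu) :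
    (1 / 2) * (∑ i, (lam i - mu i) ^ 2 + ∑ i, (lam' i - mu i) ^ 2) ≤
      ∑ a, ∑ b, ‖(ρ - σ) a b‖ ^ 2 := by
  classical
  -- spectral decompositions
  have hρdec : ρ = (hρ.1.eigenvectorUnitary : Matrix (Fin M × Fin N) (Fin M × Fin N) ℂ)
      * Matrix.diagonal (fun i => (lam (g.symm i) : ℂ))
      * star (hρ.1.eigenvectorUnitary : Matrix (Fin M × Fin N) (Fin M × Fin N) ℂ) := by
    rw [show (fun i => (lam (g.symm i) : ℂ)) = (RCLike.ofReal ∘ hρ.1.eigenvalues) from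
      funext fun i => by rw [hlam]; simp]
    exact hρ.1.spectral_theorem
  have hρ'dec : ptB ρ
      = (hρ'.eigenvectorUnitary : Matrix (Fin M × Fin N) (Fin M × Fin N) ℂ)
      * Matrix.diagonal (fun i => (lam' (g'.symm i) : ℂ))
      * star (hρ'.eigenvectorUnitary : Matrix (Fin M × Fin N) (Fin M × Fin N) ℂ) := by
    rw [show (fun i => (lam' (g'.symm i) : ℂ)) = (RCLike.ofReal ∘ hρ'.eigenvalues) from
      funext fun i => by rw [hlam']; simp]
    exact hρ'.spectral_theorem
  have hσdec : σ = (hσH.eigenvectorUnitary : Matrix (Fin M × Fin N) (Fin M × Fin N) ℂ)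
      * Matrix.diagonal (fun i => (mu (gσ.symm i) : ℂ))
      * star (hσH.eigenvectorUnitary : Matrix (Fin M × Fin N) (Fin M × Fin N) ℂ) := by
    rw [show (fun i => (mu (gσ.symm i) : ℂ)) = (RCLike.ofReal ∘ hσH.eigenvalues) from
      funext fun i => by rw [hmu]; simp]
    exact hσH.spectral_theorem
  -- first Hoffman–Wielandt application
  have h1 := hw ρ σ _ _ hρ.1.eigenvectorUnitary.2 hσH.eigenvectorUnitary.2
    lam mu g gσ hρdec hσdec hlamSorted hmuSorted
  -- the partial transpose of σ is unitarily conjugate to σ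
  obtain ⟨W, hWmem, hWconj⟩ := conj_sigma p e τ horth (fun k => (hτpsd k).1)
  have hptBσ : ptB σ = W * σ * star W := by
    conv_lhs => rw [hdecomp]
    rw [ptB_sum_smul]
    conv_rhs => rw [hdecomp]
    rw [hWconj]
    exact Finset.sum_congr rfl fun k _ => by rw [ptB_kron]
  have hσdecW : ptB σ
      = (W * (hσH.eigenvectorUnitary : Matrix (Fin M × Fin N) (Fin M × Fin N) ℂ))
      * Matrix.diagonal (fun i => (mu (gσ.symm i) : ℂ))
      * star (W * (hσH.eigenvectorUnitary : Matrix (Fin M × Fin N) (Fin M × Fin N) ℂ)) := by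
    rw [hptBσ]
    conv_lhs => rw [hσdec]
    rw [Matrix.star_mul]
    simp only [mul_assoc]
  have hWU : W * (hσH.eigenvectorUnitary : Matrix (Fin M × Fin N) (Fin M × Fin N) ℂ)
      ∈ Matrix.unitaryGroup (Fin M × Fin N) ℂ :=
    Submonoid.mul_mem _ hWmem hσH.eigenvectorUnitary.2
  have h2 := hw (ptB ρ) (ptB σ) _ _ hρ'.eigenvectorUnitary.2 hWU
    lam' mu g' gσ hρ'dec hσdecW hlam'Sorted hmuSorted
  have hfr : ∑ a, ∑ b, ‖(ptB ρ - ptB σ) a b‖ ^ 2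
      = ∑ a, ∑ b, ‖(ρ - σ) a b‖ ^ 2 := by
    have hsub : ptB ρ - ptB σ = ptB (ρ - σ) := by
      ext pq q
      simp [ptB, Matrix.sub_apply]
    rw [hsub, frob_ptB]
  rw [hfr] at h2
  linarith
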